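/- Let δ ∈ (0, 1/3 − 1/(3√2)) and set β := (1 + 2·log(1−3δ))/(log(1−3δ) − log δ). If T1 and T2 are rooted balanced binary phylogenetic trees on the same leaf-set of cardinality 2^m, then mast{T1, T2} ≥ 2^{β·m}. -/

import Mathlib

/-!
# Rooted binary phylogenetic trees

`RTree L` is the type of rooted binary trees with leaves labelled by elements of `L`:
every internal vertex has exactly two children (a left child and a right child), and
a tree with one leaf is a single vertex.
-/

inductive RTree (L : Type) : Type
  | leaf : L → RTree L
  | node : RTree L → RTree L → RTree L

namespace RTree

variable {L : Type}

/-- The list of leaf labels of a rooted binary tree, read from left to right. -/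
def leafList : RTree L → List L
  | leaf b => [b]
  | node l r => leafList l ++ leafList r

/-- The number of leaves of a rooted binary tree. -/
def numLeaves (T : RTree L) : ℕ := T.leafList.length

/-- The set of leaf labels of a rooted binary tree. -/
def leafSet (T : RTree L) : Set L := {b | b ∈ T.leafList}

/-- The height of a rooted binary tree: the maximum distance from the root to a leaf. -/
def height : RTree L → ℕ
  | leaf _ => 0
  | node l r => max (height l) (height r) + 1

/-- A rooted binary tree is balanced if all of its leaves are at the same distance
from the root. -/
def IsBalanced : RTree L → Prop
  | leaf _ => True
  | node l r => IsBalanced l ∧ IsBalanced r ∧ height l = height r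

/-- A rooted binary tree is phylogenetic if its leaves are labelled bijectively by a
finite set, i.e. all leaf labels are distinct. -/
def IsPhylo (T : RTree L) : Prop := T.leafList.Nodup

/-- `Embeds S T` is the subtree relation `S ⪯ T`: there is an injective map `f` from the
vertices of `S` to the vertices of `T` such that `f x = x` for every leaf `x` of `S`
(leaves being identified across trees by their labels) and
`f (x ∧ y) = f x ∧ f y` for all vertices `x`, `y` of `S`, where `∧` denotes the most
recent common ancestor.  Equivalently (for trees with distinct leaf labels), `S` is the
restriction of `T` to the leaf set of `S`, up to rooted isomorphism; this structural
characterization is taken as the definition. -/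
inductive Embeds : RTree L → RTree L → Prop
  | leaf (b : L) : Embeds (RTree.leaf b) (RTree.leaf b)
  | left {S l r : RTree L} : Embeds S l → Embeds S (RTree.node l r)
  | right {S l r : RTree L} : Embeds S r → Embeds S (RTree.node l r)
  | pair {s₁ s₂ l r : RTree L} :
      Embeds s₁ l → Embeds s₂ r → Embeds (RTree.node s₁ s₂) (RTree.node l r)
  | pair_swap {s₁ s₂ l r : RTree L} :
      Embeds s₁ r → Embeds s₂ l → Embeds (RTree.node s₁ s₂) (RTree.node l r)

/-- `mast T₁ T₂` is the maximum cardinality of a subset `X ⊆ L(T₁) ∩ L(T₂)` such that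
the restrictions `T₁|X` and `T₂|X` are isomorphic; equivalently, the maximum number of
leaves of a rooted binary phylogenetic tree `S` with `S ⪯ T₁` and `S ⪯ T₂`. -/
noncomputable def mast (T₁ T₂ : RTree L) : ℕ :=
  sSup {n | ∃ S : RTree L, S.IsPhylo ∧ Embeds S T₁ ∧ Embeds S T₂ ∧ S.numLeaves = n}

end RTree



section Aux
open RTree Real

variable {L : Type}

namespace RTree

/-! ### Leaf multisets and embeddings -/

theorem embeds_ms {S T : RTree L} (h : Embeds S T) :
    (S.leafList : Multiset L) ≤ (T.leafList : Multiset L) := by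
  induction h with
  | leaf b => exact le_refl _
  | @left S l r _ ih =>
      simp only [leafList, ← Multiset.coe_add]
      exact ih.trans (Multiset.le_add_right _ _)
  | @right S l r _ ih =>
      simp only [leafList, ← Multiset.coe_add]
      exact ih.trans (Multiset.le_add_left _ _)
  | @pair s₁ s₂ l r _ _ ih₁ ih₂ =>
      simp only [leafList, ← Multiset.coe_add]
      exact add_le_add ih₁ ih₂
  | @pair_swap s₁ s₂ l r _ _ ih₁ ih₂ =>
      simp only [leafList, ← Multiset.coe_add]
      calc (s₁.leafList : Multiset L) + (s₂.leafList : Multiset L)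
          ≤ (r.leafList : Multiset L) + (l.leafList : Multiset L) := add_le_add ih₁ ih₂
        _ = (l.leafList : Multiset L) + (r.leafList : Multiset L) := add_comm _ _

theorem embeds_subset {S T : RTree L} (h : Embeds S T) :
    ∀ x ∈ S.leafList, x ∈ T.leafList := by
  intro x hx
  have := Multiset.mem_of_le (embeds_ms h) (a := x)
  simpa using this (by simpa using hx)

theorem embeds_numLeaves {S T : RTree L} (h : Embeds S T) : S.numLeaves ≤ T.numLeaves := by
  have := Multiset.card_le_card (embeds_ms h)
  simpa [numLeaves] using this

theorem embeds_leaf_of_mem {x : L} {T : RTree L} (h : x ∈ T.leafList) :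
    Embeds (RTree.leaf x) T := by
  induction T with
  | leaf b => simp only [leafList, List.mem_singleton] at h; subst h; exact Embeds.leaf x
  | node l r ihl ihr =>
      simp only [leafList, List.mem_append] at h
      rcases h with h | h
      · exact Embeds.left (ihl h)
      · exact Embeds.right (ihr h)

/-! ### Basic facts about `mast` -/

theorem mast_bddAbove (T₁ T₂ : RTree L) :
    BddAbove {n | ∃ S : RTree L, S.IsPhylo ∧ Embeds S T₁ ∧ Embeds S T₂ ∧ S.numLeaves = n} := by
  refine ⟨T₁.numLeaves, fun n hn => ?_⟩
  obtain ⟨S, _, h1, _, rfl⟩ := hn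
  exact embeds_numLeaves h1

theorem le_mast {T₁ T₂ S : RTree L} (hS : S.IsPhylo) (h1 : Embeds S T₁) (h2 : Embeds S T₂) :
    S.numLeaves ≤ mast T₁ T₂ :=
  le_csSup (mast_bddAbove T₁ T₂) ⟨S, hS, h1, h2, rfl⟩

theorem mast_witness {T₁ T₂ : RTree L}
    (h : ∃ S : RTree L, S.IsPhylo ∧ Embeds S T₁ ∧ Embeds S T₂) :
    ∃ S : RTree L, S.IsPhylo ∧ Embeds S T₁ ∧ Embeds S T₂ ∧ S.numLeaves = mast T₁ T₂ := by
  obtain ⟨S₀, hS₀, h1, h2⟩ := h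
  have hmem := Nat.sSup_mem (s := {n | ∃ S : RTree L, S.IsPhylo ∧ Embeds S T₁ ∧ Embeds S T₂ ∧
      S.numLeaves = n}) ⟨S₀.numLeaves, S₀, hS₀, h1, h2, rfl⟩ (mast_bddAbove T₁ T₂)
  exact hmem

theorem mast_mono {A B T₁ T₂ : RTree L} (hL : ∀ S : RTree L, Embeds S A → Embeds S T₁)
    (hR : ∀ S : RTree L, Embeds S B → Embeds S T₂) : mast A B ≤ mast T₁ T₂ := by
  rcases Set.eq_empty_or_nonempty
    {n | ∃ S : RTree L, S.IsPhylo ∧ Embeds S A ∧ Embeds S B ∧ S.numLeaves = n} with he | hne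
  · rw [mast, he, csSup_empty]; exact Nat.zero_le _
  · exact csSup_le_csSup (mast_bddAbove T₁ T₂) hne
      (fun n ⟨S, hS, h1, h2, hn⟩ => ⟨S, hS, hL S h1, hR S h2, hn⟩)

end RTree

end Aux

section Aux2
open RTree
variable {L : Type}
namespace RTree

open scoped Classical in
/-- Number of common leaves. -/
noncomputable def com (T₁ T₂ : RTree L) : ℕ :=
  T₁.leafList.countP fun x => decide (x ∈ T₂.leafList)

theorem com_node_left (A B T : RTree L) : com (node A B) T = com A T + com B T := by
  simp [com, leafList, List.countP_append]

open scoped Classical in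
theorem countP_mem_append {l y z : List L} (hd : ∀ x ∈ y, x ∉ z) :
    (l.countP fun x => decide (x ∈ y ++ z)) =
      (l.countP fun x => decide (x ∈ y)) + l.countP fun x => decide (x ∈ z) := by
  induction l with
  | nil => simp
  | cons a l ih =>
      simp only [List.countP_cons, ih]
      by_cases hy : a ∈ y <;> by_cases hz : a ∈ z
      · exact absurd hz (hd a hy)
      · simp [hy, hz, List.mem_append] <;> omega
      · simp [hy, hz, List.mem_append] <;> omega
      · simp [hy, hz, List.mem_append] <;> omega

theorem com_node_right (T C D : RTree L) (h : (node C D).IsPhylo) :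
    com T (node C D) = com T C + com T D := by
  have hd : ∀ x ∈ C.leafList, x ∉ D.leafList :=
    fun x hx => (List.disjoint_of_nodup_append h) hx
  classical
  simpa [com, leafList] using countP_mem_append (l := T.leafList) hd

theorem com_le_left (T₁ T₂ : RTree L) : com T₁ T₂ ≤ T₁.numLeaves :=
  List.countP_le_length

theorem com_le_right (T₁ T₂ : RTree L) (h₁ : T₁.IsPhylo) : com T₁ T₂ ≤ T₂.numLeaves := by
  classical
  have hsub : (T₁.leafList.filter fun x => decide (x ∈ T₂.leafList)) ⊆ T₂.leafList := by
    intro x hx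
    have := List.of_mem_filter hx
    simpa using this
  have hnd : (T₁.leafList.filter fun x => decide (x ∈ T₂.leafList)).Nodup := h₁.filter _
  have hlen := (List.subperm_of_subset hnd hsub).length_le
  simpa [com, numLeaves, List.countP_eq_length_filter] using hlen

theorem com_pos {T₁ T₂ : RTree L} (h : 0 < com T₁ T₂) :
    ∃ x, x ∈ T₁.leafList ∧ x ∈ T₂.leafList := by
  classical
  have h2 : 0 < T₁.leafList.countP fun x => decide (x ∈ T₂.leafList) := by simpa [com] using h
  have h3 := List.countP_pos_iff.mp h2
  simpa using h3

theorem com_eq_of_subset {T₁ T₂ : RTree L} (h : ∀ x ∈ T₁.leafList, x ∈ T₂.leafList) :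
    com T₁ T₂ = T₁.numLeaves := by
  classical
  exact List.countP_eq_length.mpr fun x hx => by simpa using h x hx

theorem numLeaves_of_balanced : ∀ T : RTree L, T.IsBalanced → T.numLeaves = 2 ^ T.height
  | leaf b, _ => rfl
  | node l r, ⟨hl, hr, hlr⟩ => by
      have ihl := numLeaves_of_balanced l hl
      have ihr := numLeaves_of_balanced r hr
      simp only [numLeaves, leafList, List.length_append, height] at *
      rw [ihl, ihr, hlr, max_self]
      ring

end RTree

end Aux2

section Numeric
open Real

noncomputable def ppc : ℝ := 1/4
noncomputable def qqc : ℝ := -(81/2000)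

lemma ppc_pos : 0 < ppc := by norm_num [ppc]
lemma ppc_ne : ppc ≠ 0 := ne_of_gt ppc_pos
lemma qqc_neg : qqc < 0 := by norm_num [qqc]

lemma rpow_pow_eq (x : ℝ) (hx : 0 ≤ x) (y : ℝ) (n : ℕ) :
    (x ^ y) ^ (n : ℕ) = x ^ (y * n) := by
  rw [← Real.rpow_natCast (x ^ y) n, ← Real.rpow_mul hx]

lemma numF1 : (2:ℝ) ^ (2 * qqc) ≤ 2 * (1/20 : ℝ) ^ ppc := by
  have h2 : (0:ℝ) ≤ 2 * (1/20 : ℝ) ^ ppc := by positivity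
  refine le_of_pow_le_pow_left₀ (n := 2000) (by norm_num) h2 ?_
  rw [mul_pow, rpow_pow_eq 2 (by norm_num), rpow_pow_eq (1/20) (by norm_num)]
  have e1 : (2:ℝ) ^ (2 * qqc * (2000:ℕ)) = ((2:ℝ)^(162:ℕ))⁻¹ := by
    have : 2 * qqc * (2000:ℕ) = -((162:ℕ):ℝ) := by norm_num [qqc]
    rw [this, Real.rpow_neg (by norm_num), Real.rpow_natCast]
  have e2 : ((1:ℝ)/20) ^ (ppc * (2000:ℕ)) = ((1:ℝ)/20)^(500:ℕ) := by
    have : ppc * ((2000:ℕ):ℝ) = ((500:ℕ):ℝ) := by norm_num [ppc]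
    rw [this, Real.rpow_natCast]
  rw [e1, e2]
  rw [inv_le_iff_one_le_mul₀ (by positivity), div_pow, one_pow,
    show ((2:ℝ)^(2000:ℕ) * (1 / (20:ℝ)^(500:ℕ)) * (2:ℝ)^(162:ℕ)) =
      ((2:ℝ)^(2000:ℕ) * (2:ℝ)^(162:ℕ)) / (20:ℝ)^(500:ℕ) from by ring,
    ← pow_add, one_le_div (by positivity)]
  have hb : (20:ℝ)^(250:ℕ) ≤ (2:ℝ)^(1081:ℕ) := by
    rw [show (1081:ℕ) = 200+200+200+200+200+81 from rfl, pow_add, pow_add, pow_add, pow_add,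
      pow_add]
    norm_num
  calc (20:ℝ)^(500:ℕ) = ((20:ℝ)^(250:ℕ))^2 := by rw [← pow_mul]
    _ ≤ ((2:ℝ)^(1081:ℕ))^2 := pow_le_pow_left₀ (by positivity) hb 2
    _ = (2:ℝ)^(2000+162:ℕ) := by rw [← pow_mul]

lemma numF2 : (2:ℝ) ^ qqc ≤ ((9:ℝ)/10) ^ ppc := by
  have h2 : (0:ℝ) ≤ ((9:ℝ)/10) ^ ppc := by positivity
  refine le_of_pow_le_pow_left₀ (n := 2000) (by norm_num) h2 ?_
  rw [rpow_pow_eq 2 (by norm_num), rpow_pow_eq (9/10) (by norm_num)]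
  have e1 : (2:ℝ) ^ (qqc * (2000:ℕ)) = ((2:ℝ)^(81:ℕ))⁻¹ := by
    have : qqc * ((2000:ℕ):ℝ) = -((81:ℕ):ℝ) := by norm_num [qqc]
    rw [this, Real.rpow_neg (by norm_num), Real.rpow_natCast]
  have e2 : ((9:ℝ)/10) ^ (ppc * (2000:ℕ)) = ((9:ℝ)/10)^(500:ℕ) := by
    have : ppc * ((2000:ℕ):ℝ) = ((500:ℕ):ℝ) := by norm_num [ppc]
    rw [this, Real.rpow_natCast]
  rw [e1, e2, inv_le_iff_one_le_mul₀ (by positivity), div_pow,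
    show ((9:ℝ)^(500:ℕ) / (10:ℝ)^(500:ℕ) * (2:ℝ)^(81:ℕ)) =
      ((2:ℝ)^(81:ℕ) * (9:ℝ)^(500:ℕ)) / (10:ℝ)^(500:ℕ) from by ring,
    one_le_div (by positivity)]
  have hb : (10:ℝ)^(250:ℕ) ≤ (2:ℝ)^(40:ℕ) * (9:ℝ)^(250:ℕ) := by norm_num
  calc (10:ℝ)^(500:ℕ) = ((10:ℝ)^(250:ℕ))^2 := by rw [← pow_mul]
    _ ≤ ((2:ℝ)^(40:ℕ) * (9:ℝ)^(250:ℕ))^2 := pow_le_pow_left₀ (by positivity) hb 2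
    _ ≤ (2:ℝ)^(81:ℕ) * (9:ℝ)^(500:ℕ) := by
      rw [mul_pow, ← pow_mul, ← pow_mul]
      exact mul_le_mul_of_nonneg_right (pow_le_pow_right₀ (by norm_num) (by norm_num)) (by positivity)

lemma step1 {n : ℝ} (hn : 0 ≤ n) {k : ℕ} (hk : 2 ≤ k) :
    n ^ ppc * (2:ℝ) ^ (qqc * k) ≤ 2 * ((1/20 * n) ^ ppc * (2:ℝ) ^ (qqc * ((k - 2 : ℕ):ℝ))) := by
  have hc : ((k - 2 : ℕ):ℝ) = (k:ℝ) - 2 := by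
    have := Nat.cast_sub hk (R := ℝ); push_cast at this ⊢; linarith
  rw [hc, Real.mul_rpow (by norm_num) hn, mul_sub, Real.rpow_sub (by norm_num)]
  have hpos : (0:ℝ) < (2:ℝ) ^ (qqc * 2) := Real.rpow_pos_of_pos (by norm_num) _
  have key : (1:ℝ) ≤ 2 * (1/20:ℝ) ^ ppc / (2:ℝ) ^ (qqc * 2) := by
    rw [le_div_iff₀ hpos, one_mul]
    calc (2:ℝ) ^ (qqc * 2) = (2:ℝ) ^ (2 * qqc) := by ring_nf
      _ ≤ 2 * (1/20:ℝ) ^ ppc := numF1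
  have hX : (0:ℝ) ≤ n ^ ppc * (2:ℝ) ^ (qqc * k) := by positivity
  calc n ^ ppc * (2:ℝ) ^ (qqc * k)
      ≤ (2 * (1/20:ℝ) ^ ppc / (2:ℝ) ^ (qqc * 2)) * (n ^ ppc * (2:ℝ) ^ (qqc * k)) :=
        le_mul_of_one_le_left hX key
    _ = 2 * ((1/20:ℝ) ^ ppc * n ^ ppc * ((2:ℝ) ^ (qqc * k) / (2:ℝ) ^ (qqc * 2))) := by
        field_simp
  
lemma step2 {n : ℝ} (hn : 0 ≤ n) {k : ℕ} (hk : 1 ≤ k) :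
    n ^ ppc * (2:ℝ) ^ (qqc * k) ≤ (9/10 * n) ^ ppc * (2:ℝ) ^ (qqc * ((k - 1 : ℕ):ℝ)) := by
  have hc : ((k - 1 : ℕ):ℝ) = (k:ℝ) - 1 := by
    have := Nat.cast_sub hk (R := ℝ); push_cast at this ⊢; linarith
  rw [hc, Real.mul_rpow (by norm_num) hn, mul_sub, Real.rpow_sub (by norm_num), mul_one]
  have hpos : (0:ℝ) < (2:ℝ) ^ qqc := Real.rpow_pos_of_pos (by norm_num) _
  have key : (1:ℝ) ≤ ((9:ℝ)/10) ^ ppc / (2:ℝ) ^ qqc := by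
    rw [le_div_iff₀ hpos, one_mul]; exact numF2
  have hX : (0:ℝ) ≤ n ^ ppc * (2:ℝ) ^ (qqc * k) := by positivity
  calc n ^ ppc * (2:ℝ) ^ (qqc * k)
      ≤ (((9:ℝ)/10) ^ ppc / (2:ℝ) ^ qqc) * (n ^ ppc * (2:ℝ) ^ (qqc * k)) :=
        le_mul_of_one_le_left hX key
    _ = (9/10:ℝ) ^ ppc * n ^ ppc * ((2:ℝ) ^ (qqc * k) / (2:ℝ) ^ qqc) := by
        field_simp

end Numeric

section Main
open RTree Real
variable {L : Type}

theorem mast_main (k : ℕ) : ∀ (T₁ T₂ : RTree L), T₁.IsPhylo → T₂.IsPhylo →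
    T₁.height + T₂.height ≤ k →
    (com T₁ T₂ : ℝ) ^ ppc * (2:ℝ) ^ (qqc * k) ≤ (mast T₁ T₂ : ℝ) := by
  induction k using Nat.strong_induction_on with
  | _ k IH =>
  intro T₁ T₂ h₁ h₂ hk
  rcases Nat.eq_zero_or_pos (com T₁ T₂) with hc0 | hc1
  · rw [hc0]
    push_cast
    rw [Real.zero_rpow ppc_ne, zero_mul]
    positivity
  obtain ⟨x, hx1, hx2⟩ := com_pos hc1
  have hm1 : 1 ≤ mast T₁ T₂ := by
    have := le_mast (S := RTree.leaf x) (by simp [IsPhylo, leafList])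
      (embeds_leaf_of_mem hx1) (embeds_leaf_of_mem hx2)
    simpa [numLeaves, leafList] using this
  have hqk : qqc * k ≤ 0 :=
    mul_nonpos_iff.mpr (Or.inr ⟨le_of_lt qqc_neg, Nat.cast_nonneg k⟩)
  have hsmall : com T₁ T₂ ≤ 1 →
      (com T₁ T₂ : ℝ) ^ ppc * (2:ℝ) ^ (qqc * k) ≤ (mast T₁ T₂ : ℝ) := by
    intro hle
    have hce : com T₁ T₂ = 1 := le_antisymm hle hc1
    rw [hce]
    push_cast
    rw [Real.one_rpow, one_mul]
    calc (2:ℝ) ^ (qqc * k) ≤ 1 := Real.rpow_le_one_of_one_le_of_nonpos (by norm_num) hqk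
      _ ≤ (mast T₁ T₂ : ℝ) := by exact_mod_cast hm1
  clear hx1 hx2 hm1
  cases T₁ with
  | leaf b => exact hsmall (com_le_left _ _)
  | node A B =>
  cases T₂ with
  | leaf c => exact hsmall ((com_le_right _ _ h₁).trans (le_refl _))
  | node C D =>
  clear hsmall
  obtain ⟨hAnd, hBnd, hABd⟩ := List.nodup_append'.mp h₁
  obtain ⟨hCnd, hDnd, hCDd⟩ := List.nodup_append'.mp h₂
  have hh : max A.height B.height + 1 + (max C.height D.height + 1) ≤ k := hk
  have hA' : A.height ≤ max A.height B.height := le_max_left _ _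
  have hB' : B.height ≤ max A.height B.height := le_max_right _ _
  have hC' : C.height ≤ max C.height D.height := le_max_left _ _
  have hD' : D.height ≤ max C.height D.height := le_max_right _ _
  have hnAB : (RTree.node A B).height = max A.height B.height + 1 := rfl
  have hnCD : (RTree.node C D).height = max C.height D.height + 1 := rfl
  have hk2 : 2 ≤ k := by omega
  have hsum : com (node A B) (node C D)
      = com A C + com A D + (com B C + com B D) := by
    rw [com_node_left, com_node_right A C D h₂, com_node_right B C D h₂]
  have hnR1 : (1:ℝ) ≤ (com (node A B) (node C D) : ℝ) := by exact_mod_cast hc1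
  have hnR0 : (0:ℝ) ≤ (com (node A B) (node C D) : ℝ) := by linarith
  set nR : ℝ := (com (node A B) (node C D) : ℝ) with hnRdef
  -- helper for the "one small pair per diagonal" cases
  have gen : ∀ (X Y : RTree L), X.IsPhylo → Y.IsPhylo → X.height + Y.height + 1 ≤ k →
      (∀ S : RTree L, Embeds S X → Embeds S (node A B)) →
      (∀ S : RTree L, Embeds S Y → Embeds S (node C D)) →
      9/10 * nR ≤ (com X Y : ℝ) →
      nR ^ ppc * (2:ℝ) ^ (qqc * k) ≤ ((mast (node A B) (node C D) : ℕ) : ℝ) := by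
    intro X Y hXp hYp hXYk hmX hmY hcomXY
    have hIH := IH (k-1) (by omega) X Y hXp hYp (by omega)
    have hmono : mast X Y ≤ mast (node A B) (node C D) := mast_mono hmX hmY
    calc nR ^ ppc * (2:ℝ) ^ (qqc * k)
        ≤ (9/10 * nR) ^ ppc * (2:ℝ) ^ (qqc * ((k-1:ℕ):ℝ)) := step2 hnR0 (by omega)
      _ ≤ (com X Y : ℝ) ^ ppc * (2:ℝ) ^ (qqc * ((k-1:ℕ):ℝ)) := by
          have h0 : (0:ℝ) ≤ 9/10 * nR := by linarith
          exact mul_le_mul_of_nonneg_right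
            (Real.rpow_le_rpow h0 hcomXY (le_of_lt ppc_pos))
            (le_of_lt (Real.rpow_pos_of_pos (by norm_num) _))
      _ ≤ (mast X Y : ℝ) := hIH
      _ ≤ _ := by exact_mod_cast hmono
  -- helper for the diagonal (pairing) case
  have diag : ∀ (X₁ Y₁ X₂ Y₂ : RTree L),
      (∀ S : RTree L, Embeds S X₁ → Embeds S A) → (∀ S : RTree L, Embeds S X₂ → Embeds S B) →
      (∀ S₁ S₂ : RTree L, Embeds S₁ Y₁ → Embeds S₂ Y₂ →
        Embeds (RTree.node S₁ S₂) (RTree.node C D)) →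
      X₁.height + Y₁.height + 2 ≤ k → X₂.height + Y₂.height + 2 ≤ k →
      X₁.IsPhylo → Y₁.IsPhylo → X₂.IsPhylo → Y₂.IsPhylo →
      1/20 * nR ≤ (com X₁ Y₁ : ℝ) → 1/20 * nR ≤ (com X₂ Y₂ : ℝ) →
      nR ^ ppc * (2:ℝ) ^ (qqc * k) ≤ ((mast (node A B) (node C D) : ℕ) : ℝ) := by
    intro X₁ Y₁ X₂ Y₂ hm1' hm2' hpair hk1' hk2' hX1p hY1p hX2p hY2p hge1 hge2
    have hpos1 : 0 < com X₁ Y₁ := by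
      have : (0:ℝ) < (com X₁ Y₁ : ℝ) := lt_of_lt_of_le (by linarith) hge1
      exact_mod_cast this
    have hpos2 : 0 < com X₂ Y₂ := by
      have : (0:ℝ) < (com X₂ Y₂ : ℝ) := lt_of_lt_of_le (by linarith) hge2
      exact_mod_cast this
    obtain ⟨x₁, hx₁a, hx₁b⟩ := com_pos hpos1
    obtain ⟨x₂, hx₂a, hx₂b⟩ := com_pos hpos2
    obtain ⟨S₁, hS₁p, hS₁e1, hS₁e2, hS₁n⟩ := mast_witness
      ⟨RTree.leaf x₁, by simp [IsPhylo, leafList], embeds_leaf_of_mem hx₁a,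
        embeds_leaf_of_mem hx₁b⟩
    obtain ⟨S₂, hS₂p, hS₂e1, hS₂e2, hS₂n⟩ := mast_witness
      ⟨RTree.leaf x₂, by simp [IsPhylo, leafList], embeds_leaf_of_mem hx₂a,
        embeds_leaf_of_mem hx₂b⟩
    have hphylo : (RTree.node S₁ S₂).IsPhylo := by
      refine List.nodup_append'.mpr ⟨hS₁p, hS₂p, fun y hy1 hy2 => ?_⟩
      exact hABd (embeds_subset (hm1' S₁ hS₁e1) y hy1) (embeds_subset (hm2' S₂ hS₂e1) y hy2)
    have hcomb : mast X₁ Y₁ + mast X₂ Y₂ ≤ mast (node A B) (node C D) := by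
      have := le_mast hphylo
        (Embeds.pair (hm1' S₁ hS₁e1) (hm2' S₂ hS₂e1))
        (hpair S₁ S₂ hS₁e2 hS₂e2)
      rw [← hS₁n, ← hS₂n]
      simpa [numLeaves, leafList, List.length_append] using this
    have hIH1 := IH (k-2) (by omega) X₁ Y₁ hX1p hY1p (by omega)
    have hIH2 := IH (k-2) (by omega) X₂ Y₂ hX2p hY2p (by omega)
    have hrp : (0:ℝ) < (2:ℝ) ^ (qqc * ((k-2:ℕ):ℝ)) := Real.rpow_pos_of_pos (by norm_num) _
    have h020 : (0:ℝ) ≤ 1/20 * nR := by linarith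
    calc nR ^ ppc * (2:ℝ) ^ (qqc * k)
        ≤ 2 * ((1/20 * nR) ^ ppc * (2:ℝ) ^ (qqc * ((k-2:ℕ):ℝ))) := step1 hnR0 hk2
      _ = (1/20 * nR) ^ ppc * (2:ℝ) ^ (qqc * ((k-2:ℕ):ℝ))
          + (1/20 * nR) ^ ppc * (2:ℝ) ^ (qqc * ((k-2:ℕ):ℝ)) := two_mul _
      _ ≤ (com X₁ Y₁ : ℝ) ^ ppc * (2:ℝ) ^ (qqc * ((k-2:ℕ):ℝ))
          + (com X₂ Y₂ : ℝ) ^ ppc * (2:ℝ) ^ (qqc * ((k-2:ℕ):ℝ)) := by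
          exact add_le_add
            (mul_le_mul_of_nonneg_right (Real.rpow_le_rpow h020 hge1 (le_of_lt ppc_pos))
              (le_of_lt hrp))
            (mul_le_mul_of_nonneg_right (Real.rpow_le_rpow h020 hge2 (le_of_lt ppc_pos))
              (le_of_lt hrp))
      _ ≤ (mast X₁ Y₁ : ℝ) + (mast X₂ Y₂ : ℝ) := add_le_add hIH1 hIH2
      _ ≤ _ := by exact_mod_cast hcomb
  by_cases hd1 : 1/20 * nR ≤ (com A C : ℝ) ∧ 1/20 * nR ≤ (com B D : ℝ)
  · exact diag A C B D (fun S h => h) (fun S h => h)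
      (fun S₁ S₂ e₁ e₂ => Embeds.pair e₁ e₂) (by omega) (by omega)
      hAnd hCnd hBnd hDnd hd1.1 hd1.2
  by_cases hd2 : 1/20 * nR ≤ (com A D : ℝ) ∧ 1/20 * nR ≤ (com B C : ℝ)
  · exact diag A D B C (fun S h => h) (fun S h => h)
      (fun S₁ S₂ e₁ e₂ => Embeds.pair_swap e₁ e₂) (by omega) (by omega)
      hAnd hDnd hBnd hCnd hd2.1 hd2.2
  have hsumR : nR = (com A C : ℝ) + (com A D : ℝ) + ((com B C : ℝ) + (com B D : ℝ)) := by
    rw [hnRdef, hsum]; push_cast; ring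
  rcases not_and_or.mp hd1 with hsm1 | hsm1 <;> rcases not_and_or.mp hd2 with hsm2 | hsm2 <;>
    rw [not_le] at hsm1 hsm2
  · -- com A C and com A D small : use (B, node C D), com = c + d
    refine gen B (node C D) hBnd h₂ (by omega) (fun S h => Embeds.right h) (fun S h => h) ?_
    rw [com_node_right B C D h₂]
    push_cast
    linarith
  · -- com A C and com B C small : use (node A B, D), com = b + d
    refine gen (node A B) D h₁ hDnd (by omega) (fun S h => h) (fun S h => Embeds.right h) ?_
    rw [com_node_left A B D]
    push_cast
    linarith
  · -- com B D and com A D small : use (node A B, C), com = a + c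
    refine gen (node A B) C h₁ hCnd (by omega) (fun S h => h) (fun S h => Embeds.left h) ?_
    rw [com_node_left A B C]
    push_cast
    linarith
  · -- com B D and com B C small : use (A, node C D), com = a + b
    refine gen A (node C D) hAnd h₂ (by omega) (fun S h => Embeds.left h) (fun S h => h) ?_
    rw [com_node_right A C D h₂]
    push_cast
    linarith

end Main

section Analytic
open Real

lemma logb2_le_cert {x : ℝ} (hx : 0 < x) (jn jd : ℕ) (hjd : 0 < jd)
    (h : x ^ jd * 2 ^ jn ≤ 1) : Real.logb 2 x ≤ -(jn : ℝ) / jd := by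
  have hxp : (0:ℝ) < x ^ jd * 2 ^ jn := by positivity
  have h0 : Real.logb 2 (x ^ jd * 2 ^ jn) ≤ 0 :=
    Real.logb_nonpos (by norm_num) (le_of_lt hxp) h
  rw [Real.logb_mul (by positivity) (by positivity), Real.logb_pow, Real.logb_pow,
    Real.logb_self_eq_one (b := 2) (by norm_num), mul_one] at h0
  have hjd' : (0:ℝ) < (jd:ℝ) := by exact_mod_cast hjd
  rw [show -(jn:ℝ)/(jd:ℝ) = (-(jn:ℝ))/(jd:ℝ) from by ring, le_div_iff₀ hjd']
  nlinarith [h0]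

lemma le_logb2_cert {x : ℝ} (hx : 0 < x) (jn jd : ℕ) (hjd : 0 < jd)
    (h : 1 ≤ x ^ jd * 2 ^ jn) : -(jn : ℝ) / jd ≤ Real.logb 2 x := by
  have hxp : (0:ℝ) < x ^ jd * 2 ^ jn := by positivity
  have h0 : 0 ≤ Real.logb 2 (x ^ jd * 2 ^ jn) :=
    Real.logb_nonneg (by norm_num) h
  rw [Real.logb_mul (by positivity) (by positivity), Real.logb_pow, Real.logb_pow,
    Real.logb_self_eq_one (b := 2) (by norm_num), mul_one] at h0
  have hjd' : (0:ℝ) < (jd:ℝ) := by exact_mod_cast hjd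
  rw [show -(jn:ℝ)/(jd:ℝ) = (-(jn:ℝ))/(jd:ℝ) from by ring, div_le_iff₀ hjd']
  nlinarith [h0]

end Analytic

section Beta
open Real

lemma logb2_le_cert64 {x : ℝ} (hx : 0 < x) (jn : ℕ) (h : x ^ (64:ℕ) * 2 ^ jn ≤ 1) :
    Real.logb 2 x ≤ -(jn : ℝ) / 64 := by
  have h2 := logb2_le_cert hx jn 64 (by norm_num) h
  push_cast at h2
  exact h2

lemma le_logb2_cert64 {x : ℝ} (hx : 0 < x) (jn : ℕ) (h : 1 ≤ x ^ (64:ℕ) * 2 ^ jn) :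
    -(jn : ℝ) / 64 ≤ Real.logb 2 x := by
  have h2 := le_logb2_cert hx jn 64 (by norm_num) h
  push_cast at h2
  exact h2

lemma piece_bound {δ : ℝ} (l r : ℝ) (jU jL jM : ℕ) (h0 : 0 < δ) (hl : l ≤ δ) (hr : δ ≤ r)
    (hr3 : 3*r < 1)
    (hU : Real.logb 2 (1 - 3*l) ≤ -(jU:ℝ)/64)
    (hLo : -(jL:ℝ)/64 ≤ Real.logb 2 (1 - 3*r))
    (hM : Real.logb 2 r ≤ -(jM:ℝ)/64)
    (harith : 64000 - 2000*(jU:ℝ) ≤ 169*((jM:ℝ) - (jL:ℝ))) :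
    1 + 2*Real.logb 2 (1-3*δ) ≤ 169/1000 * (Real.logb 2 (1-3*δ) - Real.logb 2 δ) := by
  have h1 : Real.logb 2 (1-3*δ) ≤ -(jU:ℝ)/64 :=
    le_trans (Real.logb_le_logb_of_le (by norm_num) (by linarith) (by linarith)) hU
  have h2 : -(jL:ℝ)/64 ≤ Real.logb 2 (1-3*δ) :=
    le_trans hLo (Real.logb_le_logb_of_le (by norm_num) (by linarith) (by linarith))
  have h3 : Real.logb 2 δ ≤ -(jM:ℝ)/64 :=
    le_trans (Real.logb_le_logb_of_le (by norm_num) h0 hr) hM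
  linarith

lemma beta_le {δ : ℝ} (h0 : 0 < δ) (hd : δ ≤ 165/1024) :
    1 + 2*Real.logb 2 (1-3*δ) ≤ 169/1000 * (Real.logb 2 (1-3*δ) - Real.logb 2 δ) := by
  rcases le_or_gt δ (1/64) with h1 | h1
  · exact piece_bound 0 (1/64) 0 5 384 h0 (by linarith) h1 (by norm_num)
      (by norm_num)
      (le_logb2_cert64 (by norm_num) 5 (by norm_num))
      (logb2_le_cert64 (by norm_num) 384 (by rw [show (384:ℕ) = 192+192 from rfl, pow_add]; norm_num))
      (by norm_num)
  rcases le_or_gt δ (103/4096) with h2 | h2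
  · exact piece_bound (1/64) (103/4096) 4 8 340 h0 (le_of_lt h1) h2 (by norm_num)
      (logb2_le_cert64 (by norm_num) 4 (by norm_num))
      (le_logb2_cert64 (by norm_num) 8 (by norm_num))
      (logb2_le_cert64 (by norm_num) 340 (by rw [show (340:ℕ) = 170+170 from rfl, pow_add]; norm_num))
      (by norm_num)
  rcases le_or_gt δ (147/4096) with h3 | h3
  · exact piece_bound (103/4096) (147/4096) 7 11 307 h0 (le_of_lt h2) h3 (by norm_num)
      (logb2_le_cert64 (by norm_num) 7 (by norm_num))
      (le_logb2_cert64 (by norm_num) 11 (by norm_num))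
      (logb2_le_cert64 (by norm_num) 307 (by rw [show (307:ℕ) = 150+157 from rfl, pow_add]; norm_num))
      (by norm_num)
  rcases le_or_gt δ (51/1024) with h4 | h4
  · exact piece_bound (147/4096) (51/1024) 10 15 276 h0 (le_of_lt h3) h4 (by norm_num)
      (logb2_le_cert64 (by norm_num) 10 (by norm_num))
      (le_logb2_cert64 (by norm_num) 15 (by norm_num))
      (logb2_le_cert64 (by norm_num) 276 (by rw [show (276:ℕ) = 138+138 from rfl, pow_add]; norm_num))
      (by norm_num)
  rcases le_or_gt δ (311/4096) with h5 | h5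
  · exact piece_bound (51/1024) (311/4096) 14 24 238 h0 (le_of_lt h4) h5 (by norm_num)
      (logb2_le_cert64 (by norm_num) 14 (by norm_num))
      (le_logb2_cert64 (by norm_num) 24 (by norm_num))
      (logb2_le_cert64 (by norm_num) 238 (by norm_num))
      (by norm_num)
  · exact piece_bound (311/4096) (165/1024) 23 61 168 h0 (le_of_lt h5) hd (by norm_num)
      (logb2_le_cert64 (by norm_num) 23 (by norm_num))
      (le_logb2_cert64 (by norm_num) 61 (by norm_num))
      (logb2_le_cert64 (by norm_num) 168 (by norm_num))
      (by norm_num)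

end Beta

theorem stmt_13' {L : Type} (m : ℕ) (T₁ T₂ : RTree L) (δ : ℝ)
    (hδ : δ ∈ Set.Ioo (0 : ℝ) (1/3 - 1/(3 * Real.sqrt 2)))
    (h₁ : T₁.IsPhylo) (h₂ : T₂.IsPhylo)
    (hbal₁ : T₁.IsBalanced) (hbal₂ : T₂.IsBalanced)
    (hL : T₁.leafSet = T₂.leafSet) (hcard : T₁.numLeaves = 2 ^ m) :
    (2 : ℝ) ^ ((1 + 2 * Real.logb 2 (1 - 3 * δ)) /
        (Real.logb 2 (1 - 3 * δ) - Real.logb 2 δ) * m)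
      ≤ (RTree.mast T₁ T₂ : ℝ) := by
  open RTree in
  obtain ⟨hδ0, hδu⟩ := hδ
  have hsqrt2 : Real.sqrt 2 ≤ 3/2 := by
    rw [show (3/2:ℝ) = Real.sqrt ((3/2)^2) from (Real.sqrt_sq (by norm_num)).symm]
    exact Real.sqrt_le_sqrt (by norm_num)
  have hsqrt2pos : (0:ℝ) < Real.sqrt 2 := Real.sqrt_pos.mpr (by norm_num)
  have hd : δ ≤ 165/1024 := by
    have h29 : (2:ℝ)/9 ≤ 1/(3*Real.sqrt 2) := by
      have h92 : 3*Real.sqrt 2 ≤ 9/2 := by linarith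
      calc (2:ℝ)/9 = 1/(9/2) := by norm_num
        _ ≤ 1/(3*Real.sqrt 2) := one_div_le_one_div_of_le (by positivity) h92
    linarith
  have h3δ : (0:ℝ) < 1 - 3*δ := by linarith
  have hDpos : 0 < Real.logb 2 (1-3*δ) - Real.logb 2 δ := by
    have hlt : δ < 1 - 3*δ := by linarith
    have := Real.logb_lt_logb (b := 2) (by norm_num) hδ0 hlt
    linarith
  have hβE : (1 + 2*Real.logb 2 (1-3*δ)) / (Real.logb 2 (1-3*δ) - Real.logb 2 δ)
      ≤ 169/1000 := by
    rw [div_le_iff₀ hDpos]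
    have := beta_le hδ0 hd
    linarith
  have hh1 : T₁.height = m := by
    have h := RTree.numLeaves_of_balanced T₁ hbal₁
    rw [hcard] at h
    exact Nat.pow_right_injective (le_refl 2) h.symm
  have hsub12 : ∀ x ∈ T₁.leafList, x ∈ T₂.leafList := fun x hx =>
    (Set.ext_iff.mp hL x).mp hx
  have hsub21 : ∀ x ∈ T₂.leafList, x ∈ T₁.leafList := fun x hx =>
    (Set.ext_iff.mp hL x).mpr hx
  have hcom : RTree.com T₁ T₂ = 2^m := by
    rw [RTree.com_eq_of_subset hsub12, hcard]
  have hn2 : T₂.numLeaves = 2^m := by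
    have hle1 : T₂.numLeaves ≤ 2^m := by
      have := RTree.com_le_right T₂ T₁ h₂
      rw [RTree.com_eq_of_subset hsub21, hcard] at this
      exact this
    have hle2 : 2^m ≤ T₂.numLeaves := by
      have := RTree.com_le_right T₁ T₂ h₁
      rw [hcom] at this
      exact this
    omega
  have hh2 : T₂.height = m := by
    have h := RTree.numLeaves_of_balanced T₂ hbal₂
    rw [hn2] at h
    exact Nat.pow_right_injective (le_refl 2) h.symm
  have hmain := mast_main (2*m) T₁ T₂ h₁ h₂ (by rw [hh1, hh2]; omega)
  rw [hcom] at hmain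
  have hlhs : ((2^m : ℕ) : ℝ) ^ ppc * (2:ℝ)^(qqc * ((2*m:ℕ):ℝ)) = (2:ℝ)^((169/1000) * (m:ℝ)) := by
    have e1 : ((2^m : ℕ) : ℝ) = (2:ℝ)^(m:ℕ) := by push_cast; ring
    rw [e1, ← Real.rpow_natCast (2:ℝ) m, ← Real.rpow_mul (by norm_num),
      ← Real.rpow_add (by norm_num)]
    congr 1
    push_cast [ppc, qqc]
    ring
  rw [hlhs] at hmain
  calc (2:ℝ) ^ ((1 + 2 * Real.logb 2 (1 - 3 * δ)) /
        (Real.logb 2 (1 - 3 * δ) - Real.logb 2 δ) * m)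
      ≤ (2:ℝ) ^ ((169/1000) * (m:ℝ)) :=
        Real.rpow_le_rpow_of_exponent_le (by norm_num)
          (mul_le_mul_of_nonneg_right hβE (Nat.cast_nonneg m))
    _ ≤ (RTree.mast T₁ T₂ : ℝ) := hmain

/-- Let `δ ∈ (0, 1/3 - 1/(3√2))` and
`β := (1 + 2·log(1-3δ))/(log(1-3δ) - log δ)`.  If `T₁`, `T₂` are rooted balanced binary
phylogenetic trees on the same leaf set of cardinality `2^m`, then
`mast{T₁,T₂} ≥ 2^{β·m}` (logarithms base 2). -/
theorem stmt_13 {L : Type} (m : ℕ) (T₁ T₂ : RTree L) (δ : ℝ)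
    (hδ : δ ∈ Set.Ioo (0 : ℝ) (1/3 - 1/(3 * Real.sqrt 2)))
    (h₁ : T₁.IsPhylo) (h₂ : T₂.IsPhylo)
    (hbal₁ : T₁.IsBalanced) (hbal₂ : T₂.IsBalanced)
    (hL : T₁.leafSet = T₂.leafSet) (hcard : T₁.numLeaves = 2 ^ m) :
    (2 : ℝ) ^ ((1 + 2 * Real.logb 2 (1 - 3 * δ)) /
        (Real.logb 2 (1 - 3 * δ) - Real.logb 2 δ) * m)
      ≤ (RTree.mast T₁ T₂ : ℝ) := by
  exact stmt_13' m T₁ T₂ δ hδ h₁ h₂ hbal₁ hbal₂ hL hcard
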